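/- Let Φ(t,s) = a t³ + b t² s + c t s² + d s³ and define the row vector r(t₀,s₀) = (−3at₀² − 2bt₀s₀ − cs₀², −bt₀² − 2ct₀s₀ − 3ds₀², t₀, s₀) ∈ ℝ⁴. If u ∈ ℝ⁴ is nonzero, then there exists (t₀,s₀) ∈ ℝ² such that r(t₀,s₀) and u are linearly independent. -/
import Mathlib


/-- for u ∈ ℝ⁴ nonzero there exists (t₀,s₀) such that
r(t₀,s₀) = (−3at₀²−2bt₀s₀−cs₀², −bt₀²−2ct₀s₀−3ds₀², t₀, s₀) and u
are linearly independent. -/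
theorem stmt8 (a b c d : ℝ) (u : Fin 4 → ℝ) (hu : u ≠ 0) :
    ∃ t₀ s₀ : ℝ,
      LinearIndependent ℝ
        ![(![-(3 * a * t₀ ^ 2) - 2 * b * t₀ * s₀ - c * s₀ ^ 2,
            -(b * t₀ ^ 2) - 2 * c * t₀ * s₀ - 3 * d * s₀ ^ 2, t₀, s₀] : Fin 4 → ℝ),
          u] := by
  by_cases h : u 2 = 0
  · refine ⟨1, 0, (linearIndependent_fin2).2 ⟨hu, fun l hl => ?_⟩⟩
    have h2 := congrFun hl 2
    simp [h] at h2
  · refine ⟨0, 1, (linearIndependent_fin2).2 ⟨hu, fun l hl => ?_⟩⟩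
    have h2 := congrFun hl 2
    have h3 := congrFun hl 3
    simp at h2 h3
    rcases h2 with hl0 | h2'
    · subst hl0; simp at h3
    · exact h h2'
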